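/- Let 𝔤 be a finite-dimensional real Lie algebra whose Killing form B is negative definite, and let 𝔩 ⊆ 𝔤 be a Lie subalgebra. Suppose ω is a 2-cocycle on 𝔤 which is ad(𝔩)-invariant, i.e. ω([U,X],Y) + ω(X,[U,Y]) = 0 for all U ∈ 𝔩 and all X,Y ∈ 𝔤. Then there exists a unique element Z ∈ 𝔤 such that ω(X,Y) = B(Z,[X,Y]) for all X,Y ∈ 𝔤; moreover Z lies in the centralizer C_𝔤(𝔩) and can be written as Z = Z₀ + Z₁ with Z₀ in the center z(𝔩) of 𝔩 and Z₁ ∈ C_𝔤(𝔩) ∩ 𝔩^⊥, where 𝔩^⊥ is the B-orthogonal complement of 𝔩 in 𝔤. -/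

import Mathlib

/-- If `𝔤` is a finite-dimensional real Lie algebra with negative definite Killing form `B`,
`𝔩 ⊆ 𝔤` a Lie subalgebra, and `ω` an `ad 𝔩`-invariant 2-cocycle on `𝔤`, then there is a
unique `Z ∈ 𝔤` with `ω X Y = B Z ⁅X, Y⁆`; moreover `Z` lies in the centralizer of `𝔩` and
decomposes as `Z₀ + Z₁` with `Z₀` in the center of `𝔩` and `Z₁ ∈ C_𝔤(𝔩) ∩ 𝔩^⊥`. -/
theorem stmt_0 (L : Type*) [LieRing L] [LieAlgebra ℝ L] [FiniteDimensional ℝ L]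
    (hB : ∀ x : L, x ≠ 0 → killingForm ℝ L x x < 0)
    (𝔩 : LieSubalgebra ℝ L)
    (ω : L →ₗ[ℝ] L →ₗ[ℝ] ℝ)
    (halt : ∀ X : L, ω X X = 0)
    (hcoc : ∀ X Y W : L, ω ⁅X, Y⁆ W + ω ⁅Y, W⁆ X + ω ⁅W, X⁆ Y = 0)
    (hinv : ∀ U ∈ 𝔩, ∀ X Y : L, ω ⁅U, X⁆ Y + ω X ⁅U, Y⁆ = 0) :
    (∃! Z : L, ∀ X Y : L, ω X Y = killingForm ℝ L Z ⁅X, Y⁆) ∧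
    (∀ Z : L, (∀ X Y : L, ω X Y = killingForm ℝ L Z ⁅X, Y⁆) →
      (∀ U ∈ 𝔩, ⁅Z, U⁆ = 0) ∧
      ∃ Z₀ Z₁ : L, Z = Z₀ + Z₁ ∧
        Z₀ ∈ 𝔩 ∧ (∀ U ∈ 𝔩, ⁅Z₀, U⁆ = 0) ∧
        (∀ U ∈ 𝔩, ⁅Z₁, U⁆ = 0) ∧ (∀ U ∈ 𝔩, killingForm ℝ L Z₁ U = 0)) := by
  classical
  set B := killingForm ℝ L with hBdef
  have hsymm : ∀ x y : L, B x y = B y x := fun x y => LieModule.traceForm_comm ℝ L L x y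
  have hlie : ∀ x y z : L, B ⁅x, y⁆ z = B x ⁅y, z⁆ := fun x y z =>
    LieModule.traceForm_apply_lie_apply ℝ L L x y z
  have hnd : B.Nondegenerate := by
    refine ⟨fun x hx => ?_, fun x hx => ?_⟩
    · by_contra h
      exact absurd (hx x) (ne_of_lt (hB x h))
    · by_contra h
      exact absurd (hx x) (ne_of_lt (hB x h))
  have hker : ∀ x : L, (∀ y : L, B y x = 0) → x = 0 := fun x hx =>
    hnd.1 x (fun y => (hsymm x y).trans (hx y))
  have hinj : ∀ u v : L, (∀ w : L, B u w = B v w) → u = v := by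
    intro u v h
    have h0 : u - v = 0 := hnd.1 _ (fun w => by
      simp only [map_sub, LinearMap.sub_apply, h w, sub_self])
    exact sub_eq_zero.mp h0
  haveI hIK : LieAlgebra.IsKilling ℝ L := by
    refine ⟨?_⟩
    rw [eq_bot_iff]
    intro x hx
    rw [LieIdeal.mem_killingCompl] at hx
    exact hker x fun y => hx y trivial
  have hcenter : ∀ x : L, (∀ y : L, ⁅x, y⁆ = 0) → x = 0 := by
    intro x hx
    have hmem : x ∈ LieAlgebra.center ℝ L := by
      intro y
      rw [← lie_skew, hx y, neg_zero]
    rwa [LieAlgebra.center_eq_bot, LieSubmodule.mem_bot] at hmem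
  have hskew : ∀ X Y : L, ω X Y = - ω Y X := by
    intro X Y
    have h1 := halt (X + Y)
    simp only [map_add, LinearMap.add_apply, halt X, halt Y] at h1
    linarith
  -- construct the element Z via the derivation associated to ω
  set Φ : L ≃ₗ[ℝ] Module.Dual ℝ L := B.toDual hnd with hΦ
  set D0 : L →ₗ[ℝ] L := Φ.symm.toLinearMap ∘ₗ ω with hD0
  have hD0ap : ∀ X Y : L, B (D0 X) Y = ω X Y := by
    intro X Y
    show B ((B.toDual hnd).symm (ω X)) Y = ω X Y
    exact LinearMap.BilinForm.apply_toDual_symm_apply (hB := hnd) (ω X) Y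
  have leib : ∀ a b : L, D0 ⁅a, b⁆ = ⁅a, D0 b⁆ - ⁅b, D0 a⁆ := by
    intro a b
    apply hinj
    intro w
    have h1 : B (⁅a, D0 b⁆ - ⁅b, D0 a⁆) w = B ⁅a, D0 b⁆ w - B ⁅b, D0 a⁆ w := by
      simp [map_sub]
    have h2 : B ⁅a, D0 b⁆ w = - ω b ⁅a, w⁆ := by
      rw [← lie_skew a (D0 b)]
      simp only [map_neg, LinearMap.neg_apply]
      rw [hlie, hD0ap]
    have h3 : B ⁅b, D0 a⁆ w = - ω a ⁅b, w⁆ := by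
      rw [← lie_skew b (D0 a)]
      simp only [map_neg, LinearMap.neg_apply]
      rw [hlie, hD0ap]
    have h4 := hcoc a b w
    have h5 := hskew ⁅b, w⁆ a
    have h6 := hskew ⁅w, a⁆ b
    have h7 : ω b ⁅w, a⁆ = - ω b ⁅a, w⁆ := by
      have hw : ⁅w, a⁆ = -⁅a, w⁆ := (lie_skew w a).symm
      rw [hw, map_neg]
    rw [hD0ap, h1, h2, h3]
    linarith
  set D : LieDerivation ℝ L L := ⟨D0, leib⟩ with hDdef
  obtain ⟨Z, hZ⟩ := LieDerivation.IsKilling.exists_eq_ad D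
  have hZad : ∀ X : L, ⁅Z, X⁆ = D0 X := by
    intro X
    have h := DFunLike.congr_fun hZ X
    simpa [hDdef, LieAlgebra.ad_apply] using h
  have hZrep : ∀ X Y : L, ω X Y = B Z ⁅X, Y⁆ := by
    intro X Y
    rw [← hD0ap X Y, ← hZad X, hlie]
  -- uniqueness
  have huniq : ∀ Z' : L, (∀ X Y : L, ω X Y = B Z' ⁅X, Y⁆) → Z' = Z := by
    intro Z' hZ'
    have h0 : ∀ X : L, ⁅Z' - Z, X⁆ = 0 := by
      intro X
      apply hnd.1
      intro Y
      have := (hZrep X Y).symm.trans (hZ' X Y)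
      rw [hlie]
      simp only [map_sub, LinearMap.sub_apply]
      linarith
    exact sub_eq_zero.mp (hcenter _ h0)
  refine ⟨⟨Z, hZrep, huniq⟩, ?_⟩
  -- second part: for any representing Z
  intro W hW
  have hcent : ∀ U ∈ 𝔩, ⁅W, U⁆ = 0 := by
    intro U hU
    apply hcenter
    intro X
    -- show ⁅⁅W, U⁆, X⁆ = 0 using invariance
    have key : ⁅W, ⁅U, X⁆⁆ + ⁅⁅W, X⁆, U⁆ = 0 := by
      apply hinj _ 0
      intro Y
      have e1 : ∀ A A' : L, ω A A' = B ⁅W, A⁆ A' := by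
        intro A A'; rw [hW, hlie]
      have h1 := hinv U hU X Y
      rw [e1, e1] at h1
      have h2 := hlie ⁅W, X⁆ U Y
      simp only [map_add, LinearMap.add_apply, map_zero, LinearMap.zero_apply]
      linarith
    have h8 : ⁅U, ⁅W, X⁆⁆ = ⁅W, ⁅U, X⁆⁆ := by
      calc ⁅U, ⁅W, X⁆⁆ = -⁅⁅W, X⁆, U⁆ := (lie_skew U ⁅W, X⁆).symm
        _ = ⁅W, ⁅U, X⁆⁆ := by rw [eq_neg_of_add_eq_zero_right key, neg_neg]
    rw [lie_lie, h8, sub_self]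
  refine ⟨hcent, ?_⟩
  -- decomposition
  set V : Submodule ℝ L := 𝔩.toSubmodule with hV
  have hrefl : B.IsRefl := (LieModule.traceForm_isSymm ℝ L L).isRefl
  have hres : (B.restrict V).Nondegenerate := by
    refine ⟨fun x hx => ?_, fun x hx => ?_⟩
    · by_contra h
      have hx0 : (x : L) ≠ 0 := fun h' => h (Subtype.ext h')
      have := hx x
      rw [LinearMap.BilinForm.restrict_apply] at this
      exact absurd this (ne_of_lt (hB _ hx0))
    · by_contra h
      have hx0 : (x : L) ≠ 0 := fun h' => h (Subtype.ext h')
      have := hx x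
      rw [LinearMap.BilinForm.restrict_apply] at this
      exact absurd this (ne_of_lt (hB _ hx0))
  have hcompl : IsCompl V (B.orthogonal V) :=
    LinearMap.BilinForm.isCompl_orthogonal_of_restrict_nondegenerate hrefl hres
  have hsup : V ⊔ B.orthogonal V = ⊤ := hcompl.sup_eq_top
  have hWmem : W ∈ V ⊔ B.orthogonal V := by rw [hsup]; trivial
  obtain ⟨Z₀, hZ₀, Z₁, hZ₁, hsum⟩ := Submodule.mem_sup.mp hWmem
  have hZ₁perp : ∀ U ∈ 𝔩, B Z₁ U = 0 := by
    intro U hU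
    exact hrefl _ _ (hZ₁ U hU)
  have hZ₁comm : ∀ U ∈ 𝔩, ⁅Z₁, U⁆ = 0 := by
    intro U hU
    -- ⁅Z₁,U⁆ ∈ V and ∈ orthogonal V, hence 0
    have hmem1 : ⁅Z₁, U⁆ ∈ B.orthogonal V := by
      intro n hn
      show B n ⁅Z₁, U⁆ = 0
      rw [hsymm, hlie]
      exact hZ₁perp _ (𝔩.lie_mem hU hn)
    have hZ1W : ⁅Z₁, U⁆ = - ⁅Z₀, U⁆ := by
      have h : ⁅Z₀, U⁆ + ⁅Z₁, U⁆ = 0 := by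
        have h2 : ⁅W, U⁆ = ⁅Z₀, U⁆ + ⁅Z₁, U⁆ := by rw [← hsum]; simp [add_lie]
        rw [hcent U hU] at h2
        exact h2.symm
      exact eq_neg_of_add_eq_zero_right h
    have hmem2 : ⁅Z₁, U⁆ ∈ V := by
      rw [hZ1W]
      exact neg_mem (𝔩.lie_mem hZ₀ hU)
    have := hcompl.disjoint.le_bot (Submodule.mem_inf.mpr ⟨hmem2, hmem1⟩)
    simpa using this
  have hZ₀comm : ∀ U ∈ 𝔩, ⁅Z₀, U⁆ = 0 := by
    intro U hU
    have : ⁅W, U⁆ = ⁅Z₀, U⁆ + ⁅Z₁, U⁆ := by rw [← hsum]; simp [add_lie]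
    rw [hcent U hU, hZ₁comm U hU, add_zero] at this
    exact this.symm
  exact ⟨Z₀, Z₁, hsum.symm, hZ₀, hZ₀comm, hZ₁comm, hZ₁perp⟩
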